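/- Suppose G is connected and balanced with partition V₁, V₂, and x ∈ ℝⁿ is nonzero with x₁ > 0, 1 ∈ V₁. Let x̃ᵢ = |xᵢ| for i ∈ V₁ and x̃ᵢ = -|xᵢ| for i ∈ V₂. If x ≠ x̃ (i.e., some coordinate changes sign under this map) then E(x̃) < E(x) strictly, for any κ > 0. -/

import Mathlib

lemma exists_edge {α} (r : α → α → Prop) (P : α → Prop) {v k : α}
    (h : Relation.ReflTransGen r v k) (hv : P v) (hk : ¬ P k) :
    ∃ a b, r a b ∧ P a ∧ ¬ P b := by
  induction h with
  | refl => exact absurd hv hk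
  | @tail b c h1 h2 ih =>
    by_cases hb : P b
    · exact ⟨b, c, h2, hb, hk⟩
    · exact ih hb

/-- if `G` is connected with balanced partition `σ`, `x` is nonzero
with `x_v > 0` at some vertex `v ∈ V₁`, all coordinates nonzero, and the
sign-adjusted vector `x̃` differs from `x`, then `E(x̃) < E(x)` for any `κ > 0`. -/
theorem stmt9 (n : ℕ) (γ : Fin n → Fin n → ℝ)
    (hsym : ∀ i j, γ i j = γ j i) (hdiag : ∀ i, γ i i = 0)
    (hconn : ∀ i j : Fin n, Relation.ReflTransGen (fun a b => γ a b ≠ 0) i j)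
    (σ : Fin n → Bool)
    (hpart : ∀ i j, (σ i = σ j → 0 ≤ γ i j) ∧ (σ i ≠ σ j → γ i j ≤ 0))
    (W : ℝ → ℝ) (heven : ∀ t, W (-t) = W t)
    (κ : ℝ) (hκ : 0 < κ)
    (E : (Fin n → ℝ) → ℝ)
    (hE : ∀ x, E x = ∑ i, W (x i) + κ / 2 * ∑ i, ∑ j, γ i j * (x i - x j) ^ 2)
    (x : Fin n → ℝ) (hx : x ≠ 0) (hnz : ∀ i, x i ≠ 0)
    (v : Fin n) (hv : σ v = true) (hxv : 0 < x v)
    (xt : Fin n → ℝ)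
    (hxt : ∀ i, xt i = if σ i then |x i| else -|x i|)
    (hne : x ≠ xt) :
    E xt < E x := by
  -- basic coordinate facts
  have hsq : ∀ i, xt i ^ 2 = x i ^ 2 := by
    intro i
    rw [hxt i]
    split_ifs <;> simp [sq_abs]
  have hor : ∀ i, x i = xt i ∨ x i = -xt i := by
    intro i
    rw [hxt i]
    rcases abs_cases (x i) with ⟨h1, _⟩ | ⟨h1, _⟩ <;> split_ifs <;> rw [h1] <;> simp
  -- product facts
  have hprod_eq : ∀ i j, σ i = σ j → xt i * xt j = |x i| * |x j| := by
    intro i j h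
    rw [hxt i, hxt j, h]
    cases σ j <;> simp <;> ring
  have hprod_ne : ∀ i j, σ i ≠ σ j → xt i * xt j = -(|x i| * |x j|) := by
    intro i j h
    rw [hxt i, hxt j]
    cases hi : σ i <;> cases hj : σ j <;> simp_all <;> ring
  -- pointwise key inequality
  have key : ∀ i j, γ i j * (x i * x j) ≤ γ i j * (xt i * xt j) := by
    intro i j
    by_cases h : σ i = σ j
    · have hγ := (hpart i j).1 h
      rw [hprod_eq i j h]
      have : x i * x j ≤ |x i| * |x j| := by
        calc x i * x j ≤ |x i * x j| := le_abs_self _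
        _ = |x i| * |x j| := abs_mul _ _
      exact mul_le_mul_of_nonneg_left this hγ
    · have hγ := (hpart i j).2 h
      rw [hprod_ne i j h]
      have : -(|x i| * |x j|) ≤ x i * x j := by
        calc -(|x i| * |x j|) = -|x i * x j| := by rw [abs_mul]
        _ ≤ x i * x j := neg_abs_le _
      exact mul_le_mul_of_nonpos_left this hγ
  set f : Fin n → Fin n → ℝ :=
    fun i j => γ i j * (x i - x j) ^ 2 - γ i j * (xt i - xt j) ^ 2 with hf
  have hnonneg : ∀ i j, 0 ≤ f i j := by
    intro i j
    have expand : f i j = γ i j * (x i ^ 2) + γ i j * (x j ^ 2)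
        - γ i j * (xt i ^ 2) - γ i j * (xt j ^ 2)
        + 2 * (γ i j * (xt i * xt j) - γ i j * (x i * x j)) := by
      simp only [hf]; ring
    rw [expand, hsq i, hsq j]
    linarith [key i j]
  -- find a strict edge
  obtain ⟨k, hk⟩ : ∃ k, x k ≠ xt k := by
    by_contra h
    push_neg at h
    exact hne (funext h)
  have hvx : x v = xt v := by
    rw [hxt v, hv, if_pos rfl, abs_of_pos hxv]
  obtain ⟨a, b, hab, ha, hb⟩ :=
    exists_edge (fun a b => γ a b ≠ 0) (fun i => x i = xt i) (hconn v k) hvx hk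
  have hxb : x b = -xt b := (hor b).resolve_left hb
  have habpos : 0 < γ a b * (xt a * xt b) := by
    by_cases h : σ a = σ b
    · have hγ : 0 < γ a b := lt_of_le_of_ne ((hpart a b).1 h) (Ne.symm hab)
      rw [hprod_eq a b h]
      exact mul_pos hγ (mul_pos (abs_pos.mpr (hnz a)) (abs_pos.mpr (hnz b)))
    · have hγ : γ a b < 0 := lt_of_le_of_ne ((hpart a b).2 h) hab
      rw [hprod_ne a b h]
      exact mul_pos_of_neg_of_neg hγ
        (neg_lt_zero.mpr (mul_pos (abs_pos.mpr (hnz a)) (abs_pos.mpr (hnz b))))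
  have hstrict : 0 < f a b := by
    have expand : f a b = γ a b * (x a ^ 2) + γ a b * (x b ^ 2)
        - γ a b * (xt a ^ 2) - γ a b * (xt b ^ 2)
        + 2 * (γ a b * (xt a * xt b) - γ a b * (x a * x b)) := by
      simp only [hf]; ring
    have hxab : x a * x b = -(xt a * xt b) := by rw [ha, hxb]; ring
    rw [expand, hsq a, hsq b, hxab]
    linarith [habpos]
  -- sum inequality
  have hsum : 0 < ∑ i, ∑ j, f i j := by
    apply Finset.sum_pos' (fun i _ => Finset.sum_nonneg fun j _ => hnonneg i j)
    exact ⟨a, Finset.mem_univ a,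
      Finset.sum_pos' (fun j _ => hnonneg a j) ⟨b, Finset.mem_univ b, hstrict⟩⟩
  have hdiff : ∑ i, ∑ j, γ i j * (x i - x j) ^ 2
      - ∑ i, ∑ j, γ i j * (xt i - xt j) ^ 2 = ∑ i, ∑ j, f i j := by
    rw [← Finset.sum_sub_distrib]
    exact Finset.sum_congr rfl fun i _ => (Finset.sum_sub_distrib _ _).symm
  have hW : ∑ i, W (xt i) = ∑ i, W (x i) := by
    apply Finset.sum_congr rfl
    intro i _
    rw [hxt i]
    have habs : W (|x i|) = W (x i) := by
      rcases abs_cases (x i) with ⟨h1, _⟩ | ⟨h1, _⟩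
      · rw [h1]
      · rw [h1, heven]
    split_ifs
    · exact habs
    · rw [heven]; exact habs
  rw [hE, hE, hW]
  have hκ2 : 0 < κ / 2 := by linarith
  nlinarith [mul_pos hκ2 hsum, hdiff]
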